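/- For each $n$, let $F_n = \{(x_i(n), y_i(n)) : 1 \le i \le k_n\}$ be a set of $k_n$ distinct points in $\mathbb{R}^2$ with $k_n \to \infty$, and suppose $F_n$ converges in the Hausdorff metric to a bounded closed line segment $F \subset \mathbb{R}^2$ of positive length and finite slope $m$. Suppose the coordinate means satisfy $\bar{x}_n \to \mu_x \in \mathbb{R}$ and $\bar{y}_n \to \mu_y \in \mathbb{R}$, and that there exists $\delta > 0$ such that $\#\big(F_n \cap \big((\mu_x - \delta, \mu_x + \delta) \times (\mu_y - \delta, \mu_y + \delta)\big)\big) / k_n$ converges to some $p_{\delta} \in [0,1)$. Then the least squares slope $m_n = \sum_i (y_i(n) - \bar{y}_n)(x_i(n) - \bar{x}_n) / \sum_i (x_i(n) - \bar{x}_n)^2$ is well-defined for all sufficiently large $n$ and $m_n \to m$ as $n \to \infty$. -/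

import Mathlib

open Filter Set

set_option maxHeartbeats 1000000 in
/-- Suppose the finite point sets
`F n = {(x n i, y n i) : 1 ≤ i ≤ k n}` (with `k n → ∞` distinct points) converge in the
Hausdorff metric to a bounded closed line segment of positive length and finite slope
`m`, the coordinate means converge, `x̄ₙ → μx` and `ȳₙ → μy`, and for some `δ > 0` the
proportion of points of `F n` in the box `(μx - δ, μx + δ) × (μy - δ, μy + δ)`
converges to some `p < 1`. Then the least squares slope through `F n` is well defined
for all large `n` and converges to `m`. -/
theorem lsSlope_tendsto_of_hausdorff_tendsto_means
    (k : ℕ → ℕ) (x y : ℕ → ℕ → ℝ) (xb yb : ℕ → ℝ)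
    (m a b ℓ μx μy : ℝ) (hℓ : 0 < ℓ)
    (hk : Tendsto k atTop atTop)
    (hdistinct : ∀ n, Set.InjOn (fun i => (x n i, y n i)) (Set.Icc 1 (k n)))
    (hxb : ∀ n, xb n = (∑ i ∈ Finset.Icc 1 (k n), x n i) / (k n : ℝ))
    (hyb : ∀ n, yb n = (∑ i ∈ Finset.Icc 1 (k n), y n i) / (k n : ℝ))
    (hμx : Tendsto xb atTop (nhds μx)) (hμy : Tendsto yb atTop (nhds μy))
    (hconv : Tendsto (fun n => Metric.hausdorffDist
        {p : ℝ × ℝ | ∃ i : ℕ, 1 ≤ i ∧ i ≤ k n ∧ p = (x n i, y n i)}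
        {p : ℝ × ℝ | ∃ t : ℝ, 0 ≤ t ∧ t ≤ ℓ ∧ p = (a + t, b + m * t)})
      atTop (nhds 0))
    (δ : ℝ) (hδ : 0 < δ) (pδ : ℝ) (hpδ0 : 0 ≤ pδ) (hpδ1 : pδ < 1)
    (hbox : Tendsto (fun n =>
        (((Finset.Icc 1 (k n)).filter (fun i =>
          (μx - δ < x n i ∧ x n i < μx + δ) ∧
          (μy - δ < y n i ∧ y n i < μy + δ))).card : ℝ) / (k n : ℝ))
      atTop (nhds pδ)) :
    (∀ᶠ n in atTop, ∑ i ∈ Finset.Icc 1 (k n), (x n i - xb n) ^ 2 ≠ 0) ∧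
    Tendsto (fun n =>
        (∑ i ∈ Finset.Icc 1 (k n), (y n i - yb n) * (x n i - xb n)) /
        (∑ i ∈ Finset.Icc 1 (k n), (x n i - xb n) ^ 2))
      atTop (nhds m) := by
  set M : ℝ := 1 + |m| with hM
  have hM1 : (1:ℝ) ≤ M := le_add_of_nonneg_right (abs_nonneg m)
  have hM0 : (0:ℝ) < M := lt_of_lt_of_le one_pos hM1
  set d : ℝ := δ / (2 * M) with hddef
  have hd0 : 0 < d := div_pos hδ (by positivity)
  have hdδ : d ≤ δ := by
    rw [hddef, div_le_iff₀ (by positivity)]; nlinarith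
  have hMd : M * d = δ / 2 := by rw [hddef]; field_simp
  clear_value M d
  -- nonemptiness and boundedness of the two sets
  have hTne : ({p : ℝ × ℝ | ∃ t : ℝ, 0 ≤ t ∧ t ≤ ℓ ∧ p = (a + t, b + m * t)}).Nonempty :=
    ⟨(a + 0, b + m * 0), 0, le_refl 0, hℓ.le, rfl⟩
  have hTbdd : Bornology.IsBounded
      {p : ℝ × ℝ | ∃ t : ℝ, 0 ≤ t ∧ t ≤ ℓ ∧ p = (a + t, b + m * t)} := by
    have heq : {p : ℝ × ℝ | ∃ t : ℝ, 0 ≤ t ∧ t ≤ ℓ ∧ p = (a + t, b + m * t)}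
        = (fun t : ℝ => (a + t, b + m * t)) '' Set.Icc 0 ℓ := by
      ext p
      simp only [Set.mem_setOf_eq, Set.mem_image, Set.mem_Icc]
      constructor
      · rintro ⟨t, h1, h2, h3⟩; exact ⟨t, ⟨h1, h2⟩, h3.symm⟩
      · rintro ⟨t, ⟨h1, h2⟩, h3⟩; exact ⟨t, h1, h2, h3.symm⟩
    rw [heq]
    exact (isCompact_Icc.image (by continuity)).isBounded
  have hFne : ∀ n, 1 ≤ k n →
      ({p : ℝ × ℝ | ∃ i : ℕ, 1 ≤ i ∧ i ≤ k n ∧ p = (x n i, y n i)}).Nonempty :=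
    fun n h => ⟨(x n 1, y n 1), 1, le_refl 1, h, rfl⟩
  have hFbdd : ∀ n, Bornology.IsBounded
      {p : ℝ × ℝ | ∃ i : ℕ, 1 ≤ i ∧ i ≤ k n ∧ p = (x n i, y n i)} := by
    intro n
    have hsub : {p : ℝ × ℝ | ∃ i : ℕ, 1 ≤ i ∧ i ≤ k n ∧ p = (x n i, y n i)}
        ⊆ (fun i => (x n i, y n i)) '' Set.Icc 1 (k n) := by
      rintro p ⟨i, h1, h2, rfl⟩; exact ⟨i, ⟨h1, h2⟩, rfl⟩
    exact (((Set.finite_Icc 1 (k n)).image _).isBounded).subset hsub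
  -- key per-point estimate
  have key : ∀ ε : ℝ, 0 < ε → ∀ n : ℕ, 1 ≤ k n →
      Metric.hausdorffDist
        {p : ℝ × ℝ | ∃ i : ℕ, 1 ≤ i ∧ i ≤ k n ∧ p = (x n i, y n i)}
        {p : ℝ × ℝ | ∃ t : ℝ, 0 ≤ t ∧ t ≤ ℓ ∧ p = (a + t, b + m * t)} < ε →
      ∀ i ∈ Finset.Icc 1 (k n),
        |y n i - b - m * (x n i - a)| ≤ M * ε ∧ a - ε ≤ x n i ∧ x n i ≤ a + ℓ + ε := by
    intro ε hε n hkn hdist i hi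
    rw [Finset.mem_Icc] at hi
    have hmem : (x n i, y n i) ∈
        {p : ℝ × ℝ | ∃ i : ℕ, 1 ≤ i ∧ i ≤ k n ∧ p = (x n i, y n i)} :=
      ⟨i, hi.1, hi.2, rfl⟩
    obtain ⟨q, hq, hdq⟩ := Metric.exists_dist_lt_of_hausdorffDist_lt hmem hdist
      (Metric.hausdorffEdist_ne_top_of_nonempty_of_bounded (hFne n hkn) hTne (hFbdd n) hTbdd)
    obtain ⟨t, ht0, htl, rfl⟩ := hq
    rw [Prod.dist_eq, max_lt_iff] at hdq
    obtain ⟨h1, h2⟩ := hdq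
    rw [Real.dist_eq] at h1 h2
    simp only at h1 h2
    have hx1 := abs_lt.mp h1
    have hy1 := abs_lt.mp h2
    refine ⟨?_, by linarith [hx1.1], by linarith [hx1.2]⟩
    have heq : y n i - b - m * (x n i - a)
        = (y n i - (b + m * t)) - m * (x n i - (a + t)) := by ring
    rw [heq]
    calc |(y n i - (b + m * t)) - m * (x n i - (a + t))|
        ≤ |y n i - (b + m * t)| + |m * (x n i - (a + t))| := abs_sub _ _
      _ = |y n i - (b + m * t)| + |m| * |x n i - (a + t)| := by rw [abs_mul]
      _ ≤ ε + |m| * ε := by nlinarith [abs_nonneg m]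
      _ = M * ε := by rw [hM]; ring
  -- averaged estimate
  have avg : ∀ ε : ℝ, 0 < ε → ∀ n : ℕ, 1 ≤ k n →
      Metric.hausdorffDist
        {p : ℝ × ℝ | ∃ i : ℕ, 1 ≤ i ∧ i ≤ k n ∧ p = (x n i, y n i)}
        {p : ℝ × ℝ | ∃ t : ℝ, 0 ≤ t ∧ t ≤ ℓ ∧ p = (a + t, b + m * t)} < ε →
      |yb n - b - m * (xb n - a)| ≤ M * ε ∧ a - ε ≤ xb n ∧ xb n ≤ a + ℓ + ε := by
    intro ε hε n hkn hdist
    have hk0 : (0:ℝ) < (k n : ℝ) := by exact_mod_cast hkn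
    have hcard : (Finset.Icc 1 (k n)).card = k n := by rw [Nat.card_Icc]; omega
    have hpt := key ε hε n hkn hdist
    refine ⟨?_, ?_, ?_⟩
    · have hsum_eq : yb n - b - m * (xb n - a)
          = (∑ i ∈ Finset.Icc 1 (k n), (y n i - b - m * (x n i - a))) / (k n : ℝ) := by
        rw [hxb, hyb, Finset.sum_sub_distrib, Finset.sum_sub_distrib, Finset.sum_const,
          hcard]
        rw [← Finset.mul_sum, Finset.sum_sub_distrib, Finset.sum_const, hcard]
        field_simp
        simp only [nsmul_eq_mul]
      rw [hsum_eq, abs_div, abs_of_pos hk0, div_le_iff₀ hk0]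
      calc |∑ i ∈ Finset.Icc 1 (k n), (y n i - b - m * (x n i - a))|
          ≤ ∑ i ∈ Finset.Icc 1 (k n), |y n i - b - m * (x n i - a)| :=
            Finset.abs_sum_le_sum_abs _ _
        _ ≤ (Finset.Icc 1 (k n)).card • (M * ε) :=
            Finset.sum_le_card_nsmul _ _ _ (fun i hi => (hpt i hi).1)
        _ = M * ε * (k n : ℝ) := by rw [hcard, nsmul_eq_mul]; ring
    · rw [hxb, le_div_iff₀ hk0]
      calc (a - ε) * (k n : ℝ) = (Finset.Icc 1 (k n)).card • (a - ε) := by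
            rw [hcard, nsmul_eq_mul]; ring
        _ ≤ ∑ i ∈ Finset.Icc 1 (k n), x n i :=
            Finset.card_nsmul_le_sum _ _ _ (fun i hi => (hpt i hi).2.1)
    · rw [hxb, div_le_iff₀ hk0]
      calc (∑ i ∈ Finset.Icc 1 (k n), x n i)
          ≤ (Finset.Icc 1 (k n)).card • (a + ℓ + ε) :=
            Finset.sum_le_card_nsmul _ _ _ (fun i hi => (hpt i hi).2.2)
        _ = (a + ℓ + ε) * (k n : ℝ) := by rw [hcard, nsmul_eq_mul]; ring
  -- the limit mean lies on the line
  have hline : μy - b - m * (μx - a) = 0 := by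
    have hg : Tendsto (fun n => yb n - b - m * (xb n - a)) atTop
        (nhds (μy - b - m * (μx - a))) :=
      (hμy.sub tendsto_const_nhds).sub (Tendsto.const_mul m (hμx.sub tendsto_const_nhds))
    by_contra hne
    have habs : 0 < |μy - b - m * (μx - a)| := abs_pos.mpr hne
    set ε₀ : ℝ := |μy - b - m * (μx - a)| / (2 * M) with hε₀def
    have hε₀ : 0 < ε₀ := by positivity
    clear_value ε₀
    have hev : ∀ᶠ n in atTop, |yb n - b - m * (xb n - a)| ≤ M * ε₀ := by
      filter_upwards [hk.eventually_ge_atTop 1, hconv.eventually_lt_const hε₀]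
        with n h1 h2
      exact (avg ε₀ hε₀ n h1 h2).1
    have := le_of_tendsto hg.abs hev
    have hMε : M * ε₀ = |μy - b - m * (μx - a)| / 2 := by
      rw [hε₀def]; field_simp
    rw [hMε] at this
    linarith
  -- lower bound for the sum of squares
  set c : ℝ := (1 - pδ) / 2 * (d / 2) ^ 2 with hcdef
  have hc0 : 0 < c := by
    have h1 : 0 < 1 - pδ := by linarith
    positivity
  clear_value c
  have hlow : ∀ᶠ n in atTop, (0:ℝ) < (k n : ℝ) ∧
      c * (k n : ℝ) ≤ ∑ i ∈ Finset.Icc 1 (k n), (x n i - xb n) ^ 2 := by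
    have hq : pδ < (1 + pδ) / 2 := by linarith
    filter_upwards [hk.eventually_ge_atTop 1, hconv.eventually_lt_const hd0,
      Metric.tendsto_nhds.mp hμx (d / 2) (half_pos hd0),
      hbox.eventually_lt_const hq] with n h1 h2 h3 h4
    have hk0 : (0:ℝ) < (k n : ℝ) := by exact_mod_cast h1
    refine ⟨hk0, ?_⟩
    rw [Real.dist_eq] at h3
    have hcard : (Finset.Icc 1 (k n)).card = k n := by rw [Nat.card_Icc]; omega
    have hsplit : ((Finset.Icc 1 (k n)).filter (fun i =>
          (μx - δ < x n i ∧ x n i < μx + δ) ∧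
          (μy - δ < y n i ∧ y n i < μy + δ))).card
        + ((Finset.Icc 1 (k n)).filter (fun i => ¬ ((μx - δ < x n i ∧ x n i < μx + δ) ∧
          (μy - δ < y n i ∧ y n i < μy + δ)))).card = k n := by
      rw [Finset.card_filter_add_card_filter_not, hcard]
    have hBcard : ((((Finset.Icc 1 (k n)).filter (fun i =>
          (μx - δ < x n i ∧ x n i < μx + δ) ∧
          (μy - δ < y n i ∧ y n i < μy + δ))).card : ℝ)) < (1 + pδ) / 2 * (k n : ℝ) := by
      rw [div_lt_iff₀ hk0] at h4
      exact h4
    have hOcard : (1 - pδ) / 2 * (k n : ℝ)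
        ≤ ((((Finset.Icc 1 (k n)).filter (fun i => ¬ ((μx - δ < x n i ∧ x n i < μx + δ) ∧
          (μy - δ < y n i ∧ y n i < μy + δ)))).card : ℝ)) := by
      have hcast : ((((Finset.Icc 1 (k n)).filter (fun i =>
          (μx - δ < x n i ∧ x n i < μx + δ) ∧
          (μy - δ < y n i ∧ y n i < μy + δ))).card : ℝ))
          + ((((Finset.Icc 1 (k n)).filter (fun i => ¬ ((μx - δ < x n i ∧ x n i < μx + δ) ∧
          (μy - δ < y n i ∧ y n i < μy + δ)))).card : ℝ)) = (k n : ℝ) := by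
        exact_mod_cast congrArg (Nat.cast : ℕ → ℝ) hsplit
      linarith
    have hptfar : ∀ i ∈ (Finset.Icc 1 (k n)).filter (fun i =>
          ¬ ((μx - δ < x n i ∧ x n i < μx + δ) ∧ (μy - δ < y n i ∧ y n i < μy + δ))),
        (d / 2) ^ 2 ≤ (x n i - xb n) ^ 2 := by
      intro i hi
      rw [Finset.mem_filter] at hi
      obtain ⟨his, hnbox⟩ := hi
      have hout : δ ≤ |x n i - μx| ∨ δ ≤ |y n i - μy| := by
        by_contra hcon
        push_neg at hcon
        obtain ⟨ha1, ha2⟩ := hcon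
        rw [abs_lt] at ha1 ha2
        exact hnbox ⟨⟨by linarith [ha1.1], by linarith [ha1.2]⟩,
          ⟨by linarith [ha2.1], by linarith [ha2.2]⟩⟩
      have hxfar : d ≤ |x n i - μx| := by
        rcases hout with h | h
        · linarith
        · have hki := (key d hd0 n h1 h2 i his).1
          have hdecomp : y n i - μy = (y n i - b - m * (x n i - a)) + m * (x n i - μx) := by
            have hμy' : μy = b + m * (μx - a) := by linarith
            rw [hμy']; ring
          have ht0 : (0:ℝ) ≤ |x n i - μx| := abs_nonneg _
          have hbd : δ ≤ M * d + |m| * |x n i - μx| := by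
            calc δ ≤ |y n i - μy| := h
              _ = |(y n i - b - m * (x n i - a)) + m * (x n i - μx)| := by rw [hdecomp]
              _ ≤ |y n i - b - m * (x n i - a)| + |m * (x n i - μx)| := abs_add_le _ _
              _ = |y n i - b - m * (x n i - a)| + |m| * |x n i - μx| := by rw [abs_mul]
              _ ≤ M * d + |m| * |x n i - μx| := by linarith
          have hmle : |m| * |x n i - μx| ≤ M * |x n i - μx| :=
            mul_le_mul_of_nonneg_right (by rw [hM]; linarith) ht0
          have hMdM : M * d ≤ M * |x n i - μx| := by linarith
          exact le_of_mul_le_mul_left hMdM hM0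
      have hxxb : d / 2 ≤ |x n i - xb n| := by
        have htri : |x n i - μx| ≤ |x n i - xb n| + |xb n - μx| := by
          have heq : x n i - μx = (x n i - xb n) + (xb n - μx) := by ring
          rw [heq]; exact abs_add_le _ _
        linarith
      calc (d / 2) ^ 2 ≤ |x n i - xb n| ^ 2 :=
            pow_le_pow_left₀ (by linarith) hxxb 2
        _ = (x n i - xb n) ^ 2 := sq_abs _
    calc c * (k n : ℝ) = (1 - pδ) / 2 * (k n : ℝ) * (d / 2) ^ 2 := by rw [hcdef]; ring
      _ ≤ ((((Finset.Icc 1 (k n)).filter (fun i => ¬ ((μx - δ < x n i ∧ x n i < μx + δ) ∧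
          (μy - δ < y n i ∧ y n i < μy + δ)))).card : ℝ)) * (d / 2) ^ 2 := by
          have h0 : (0:ℝ) ≤ (d / 2) ^ 2 := sq_nonneg _
          exact mul_le_mul_of_nonneg_right hOcard h0
      _ = ((Finset.Icc 1 (k n)).filter (fun i => ¬ ((μx - δ < x n i ∧ x n i < μx + δ) ∧
          (μy - δ < y n i ∧ y n i < μy + δ)))).card • ((d / 2) ^ 2) := by
          rw [nsmul_eq_mul]
      _ ≤ ∑ i ∈ (Finset.Icc 1 (k n)).filter (fun i => ¬ ((μx - δ < x n i ∧ x n i < μx + δ) ∧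
          (μy - δ < y n i ∧ y n i < μy + δ))), (x n i - xb n) ^ 2 :=
          Finset.card_nsmul_le_sum _ _ _ hptfar
      _ ≤ ∑ i ∈ Finset.Icc 1 (k n), (x n i - xb n) ^ 2 :=
          Finset.sum_le_sum_of_subset_of_nonneg (Finset.filter_subset _ _)
            (fun i _ _ => sq_nonneg _)
  constructor
  · filter_upwards [hlow] with n hn
    have := hn.2
    exact ne_of_gt (lt_of_lt_of_le (mul_pos hc0 hn.1) hn.2)
  · rw [Metric.tendsto_nhds]
    intro ε' hε'
    set C : ℝ := ℓ + 2 with hCdef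
    have hC0 : 0 < C := by positivity
    clear_value C
    have h4MC : (0:ℝ) < 4 * M * C := by positivity
    set ε : ℝ := min d (min 1 (c * ε' / (4 * M * C))) with hεdef
    have hε0 : 0 < ε := lt_min hd0 (lt_min one_pos (div_pos (mul_pos hc0 hε') h4MC))
    have hεd : ε ≤ d := min_le_left _ _
    have hε1 : ε ≤ 1 := (min_le_right _ _).trans (min_le_left _ _)
    have hεc : ε ≤ c * ε' / (4 * M * C) := (min_le_right _ _).trans (min_le_right _ _)
    clear_value ε
    filter_upwards [hlow, hk.eventually_ge_atTop 1, hconv.eventually_lt_const hε0]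
      with n hlown hk1 hdist
    obtain ⟨hk0, hSxx⟩ := hlown
    have hcard : (Finset.Icc 1 (k n)).card = k n := by rw [Nat.card_Icc]; omega
    have hpt := key ε hε0 n hk1 hdist
    have havg := avg ε hε0 n hk1 hdist
    obtain ⟨hyb', hxb1, hxb2⟩ := havg
    have hterm : ∀ i ∈ Finset.Icc 1 (k n),
        |(y n i - yb n) * (x n i - xb n) - m * (x n i - xb n) ^ 2| ≤ 2 * M * ε * C := by
      intro i hi
      obtain ⟨hyi, hx1, hx2⟩ := hpt i hi
      have hxd : |x n i - xb n| ≤ C := by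
        rw [abs_le]; constructor <;> [linarith; linarith]
      have heb : |(y n i - yb n) - m * (x n i - xb n)| ≤ 2 * M * ε := by
        have heq : (y n i - yb n) - m * (x n i - xb n)
            = (y n i - b - m * (x n i - a)) - (yb n - b - m * (xb n - a)) := by ring
        rw [heq]
        calc |(y n i - b - m * (x n i - a)) - (yb n - b - m * (xb n - a))|
            ≤ |y n i - b - m * (x n i - a)| + |yb n - b - m * (xb n - a)| := abs_sub _ _
          _ ≤ M * ε + M * ε := by linarith
          _ = 2 * M * ε := by ring
      have heq2 : (y n i - yb n) * (x n i - xb n) - m * (x n i - xb n) ^ 2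
          = ((y n i - yb n) - m * (x n i - xb n)) * (x n i - xb n) := by ring
      rw [heq2, abs_mul]
      exact mul_le_mul heb hxd (abs_nonneg _)
        (mul_nonneg (mul_nonneg (by norm_num) hM0.le) hε0.le)
    have hnum : |(∑ i ∈ Finset.Icc 1 (k n), (y n i - yb n) * (x n i - xb n))
        - m * ∑ i ∈ Finset.Icc 1 (k n), (x n i - xb n) ^ 2|
        ≤ (k n : ℝ) * (2 * M * ε * C) := by
      rw [Finset.mul_sum, ← Finset.sum_sub_distrib]
      calc |∑ i ∈ Finset.Icc 1 (k n),
            ((y n i - yb n) * (x n i - xb n) - m * (x n i - xb n) ^ 2)|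
          ≤ ∑ i ∈ Finset.Icc 1 (k n),
            |(y n i - yb n) * (x n i - xb n) - m * (x n i - xb n) ^ 2| :=
            Finset.abs_sum_le_sum_abs _ _
        _ ≤ (Finset.Icc 1 (k n)).card • (2 * M * ε * C) :=
            Finset.sum_le_card_nsmul _ _ _ hterm
        _ = (k n : ℝ) * (2 * M * ε * C) := by rw [hcard, nsmul_eq_mul]
    set S : ℝ := ∑ i ∈ Finset.Icc 1 (k n), (x n i - xb n) ^ 2 with hSdef
    set N : ℝ := ∑ i ∈ Finset.Icc 1 (k n), (y n i - yb n) * (x n i - xb n) with hNdef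
    clear_value S N
    have hS0 : 0 < S := lt_of_lt_of_le (mul_pos hc0 hk0) hSxx
    rw [Real.dist_eq]
    have hdiv : N / S - m = (N - m * S) / S := by field_simp
    rw [hdiv, abs_div, abs_of_pos hS0]
    have h1 : |N - m * S| / S ≤ ((k n : ℝ) * (2 * M * ε * C)) / (c * (k n : ℝ)) :=
      div_le_div₀ (le_trans (abs_nonneg _) hnum) hnum (mul_pos hc0 hk0) hSxx
    have h2 : ((k n : ℝ) * (2 * M * ε * C)) / (c * (k n : ℝ)) = 2 * M * ε * C / c := by
      rw [mul_comm (c : ℝ) ((k n : ℝ))]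
      rw [mul_div_mul_left _ _ (ne_of_gt hk0)]
    have h3 : 2 * M * ε * C / c ≤ ε' / 2 := by
      rw [div_le_iff₀ hc0]
      have hεc2 : ε * (4 * M * C) ≤ c * ε' := by
        rw [← le_div_iff₀ h4MC]; exact hεc
      linarith
    calc |N - m * S| / S ≤ 2 * M * ε * C / c := by rw [← h2]; exact h1
      _ ≤ ε' / 2 := h3
      _ < ε' := by linarith
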